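/- Let E be a Hilbert C*-module over a unital C*-algebra A and c ∈ E with B(c,c) = 0, i.e., (1 − θ_{c,c})(x·(1 − ⟨c,c⟩)) = 0 for all x ∈ E. Then c is a tripotent: c·⟨c,c⟩ = c. -/

import Mathlib

open scoped RightActions

/-- The Hilbert C⋆-module class as Mathlib defined it in December 2024 (a right `A`-module,
via `SMul Aᵐᵒᵖ E`); Mathlib's current `CStarModule` uses a left `A`-action instead. -/
class OldCStarModule (A E : Type*) [NonUnitalSemiring A] [StarRing A] [Module ℂ A]
    [AddCommGroup E] [Module ℂ E] [PartialOrder A] [SMul Aᵐᵒᵖ E] [Norm A] [Norm E]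
    extends Inner A E where
  inner_add_right {x} {y} {z} : inner x (y + z) = inner x y + inner x z
  inner_self_nonneg {x} : 0 ≤ inner x x
  inner_self {x} : inner x x = 0 ↔ x = 0
  inner_op_smul_right {a : A} {x y : E} : inner x (y <• a) = inner x y * a
  inner_smul_right_complex {z : ℂ} {x} {y} : inner x (z • y) = z • inner x y
  star_inner x y : star (inner x y) = inner y x
  norm_eq_sqrt_norm_inner_self x : ‖x‖ = √‖inner x x‖

variable {A : Type*} [CStarAlgebra A] [PartialOrder A] [StarOrderedRing A]
variable {E : Type*} [NormedAddCommGroup E] [NormedSpace ℂ E] [Module Aᵐᵒᵖ E]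
  [SMulCommClass ℂ Aᵐᵒᵖ E] [OldCStarModule A E] [CompleteSpace E]

local notation "⟪" x ", " y "⟫" => inner (𝕜 := A) x y

theorem OldCStarModule.inner_zero_right' (x : E) : ⟪x, (0 : E)⟫ = 0 := by
  have h2 := OldCStarModule.inner_add_right (A := A) (x := x) (y := (0 : E)) (z := 0)
  rw [add_zero] at h2
  exact add_left_cancel (by rw [add_zero]; exact h2.symm : ⟪x, (0 : E)⟫ + ⟪x, (0 : E)⟫ = ⟪x, (0 : E)⟫ + 0)

theorem OldCStarModule.inner_op_smul_left' (a : A) (x y : E) : ⟪x <• a, y⟫ = star a * ⟪x, y⟫ := by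
  rw [← OldCStarModule.star_inner (A := A) y (x <• a), OldCStarModule.inner_op_smul_right, star_mul,
    OldCStarModule.star_inner]

/-- If `B(c,c) = 0` then `c` is a tripotent: `c·⟪c,c⟫ = c`. -/
theorem stmt19 (c : E)
    (h : ∀ x : E, (x <• (1 - ⟪c, c⟫)) - c <• ⟪c, x <• (1 - ⟪c, c⟫)⟫ = 0) :
    c <• ⟪c, c⟫ = c := by
  set a := ⟪c, c⟫ with ha
  have hsa : star a = a := OldCStarModule.star_inner c c
  have hsub : ∀ b b' : A, (c <• (b - b') : E) = c <• b - c <• b' := by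
    intro b b'
    show (MulOpposite.op (b - b') • c : E) = _
    rw [MulOpposite.op_sub, sub_smul]
  have hc := h c
  rw [OldCStarModule.inner_op_smul_right, ← ha] at hc
  -- hc : c <• (1 - a) - c <• (a * (1 - a)) = 0
  have key : c <• ((1 - a) * (1 - a)) = 0 := by
    rw [show (1 - a) * (1 - a) = (1 - a) - a * (1 - a) by noncomm_ring, hsub]
    exact hc
  have hb : (1 - a) * (a * ((1 - a) * (1 - a))) = 0 := by
    have := congrArg (fun z : E => ⟪c <• (1 - a), z⟫) key
    simp only [OldCStarModule.inner_zero_right'] at this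
    rw [OldCStarModule.inner_op_smul_left', OldCStarModule.inner_op_smul_right,
      star_sub, star_one, hsa, ← ha] at this
    exact this
  have hzero : c <• (1 - a) = 0 := by
    rw [← OldCStarModule.inner_self (A := A)]
    rw [OldCStarModule.inner_op_smul_left', OldCStarModule.inner_op_smul_right,
      star_sub, star_one, hsa, ← ha]
    have hstar : star ((1 - a) * (a * (1 - a))) = (1 - a) * (a * (1 - a)) := by
      simp [star_mul, hsa, mul_assoc]
    have hsq : star ((1 - a) * (a * (1 - a))) * ((1 - a) * (a * (1 - a))) = 0 := by
      rw [hstar]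
      calc ((1 - a) * (a * (1 - a))) * ((1 - a) * (a * (1 - a)))
          = ((1 - a) * (a * ((1 - a) * (1 - a)))) * (a * (1 - a)) := by noncomm_ring
        _ = 0 := by rw [hb, zero_mul]
    exact (CStarRing.star_mul_self_eq_zero_iff _).mp hsq
  rw [hsub, sub_eq_zero] at hzero
  have h1 : c <• (1:A) = c := by
    show (MulOpposite.op (1:A) • c : E) = c
    simp
  rw [h1] at hzero
  exact hzero.symm
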